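/- Arbitrarily large gap: for every real K > 0 there exists a prime d and a family of d² pure states {|Ψ_{y₀y₁}⟩} in ℂ^d such that H_∞(Y₀Y₁|E) = log₂ d ≥ 2K + 2, while for every classical-bit extension C consistent with the marginal, H_∞(Y_C | E, C) ≤ 1; hence H_∞(Y_C|E,C) < H_∞(Y₀Y₁|E)/2 − K. -/

import Mathlib

open Matrix Complex Finset
open scoped ComplexOrder

noncomputable section

def ω (d : ℕ) : ℂ := Complex.exp (2 * ↑Real.pi * Complex.I / (d : ℂ))

def Xp (d : ℕ) : Matrix (Fin d) (Fin d) ℂ :=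
  Matrix.of fun j k => if (j : ℕ) = ((k : ℕ) + 1) % d then 1 else 0

def Zp (d : ℕ) : Matrix (Fin d) (Fin d) ℂ :=
  Matrix.diagonal fun j => ω d ^ (j : ℕ)

def Fm (d : ℕ) : Matrix (Fin d) (Fin d) ℂ :=
  Matrix.of fun j k => ω d ^ ((j : ℕ) * (k : ℕ)) / ((Real.sqrt d : ℝ) : ℂ)

def ket (d : ℕ) (y : Fin d) : Fin d → ℂ := fun j => if j = y then 1 else 0

def e0 (d : ℕ) : Fin d → ℂ := fun j => if (j : ℕ) = 0 then 1 else 0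

def Psi (d : ℕ) : Fin d → ℂ :=
  (((Real.sqrt (2 * (1 + 1 / Real.sqrt d)) : ℝ) : ℂ))⁻¹ •
    (e0 d + (Fm d).mulVec (e0 d))

def dotc {d : ℕ} (v w : Fin d → ℂ) : ℂ := ∑ j, (starRingEnd ℂ) (v j) * w j

def outer {d : ℕ} (v : Fin d → ℂ) : Matrix (Fin d) (Fin d) ℂ :=
  Matrix.of fun i j => v i * (starRingEnd ℂ) (v j)

def enc (d : ℕ) (y₀ y₁ : Fin d) : Fin d → ℂ :=
  ((Xp d ^ (y₀ : ℕ)) * (Zp d ^ (y₁ : ℕ))).mulVec (Psi d)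

namespace Aux17

lemma omega_prim {d : ℕ} (hd : d ≠ 0) : IsPrimitiveRoot (ω d) d :=
  Complex.isPrimitiveRoot_exp d hd

lemma conj_omega_mul_self (d : ℕ) : (starRingEnd ℂ) (ω d) * ω d = 1 := by
  have h : (starRingEnd ℂ) (2 * (Real.pi : ℂ) * Complex.I / (d : ℂ))
      = -(2 * (Real.pi : ℂ) * Complex.I / (d : ℂ)) := by
    simp only [map_div₀, _root_.map_mul, Complex.conj_I, Complex.conj_ofReal,
      map_ofNat, map_natCast]
    ring
  rw [ω, ← Complex.exp_conj, h, ← Complex.exp_add, neg_add_cancel, Complex.exp_zero]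

lemma conj_omega_pow_mul_self (d m : ℕ) :
    (starRingEnd ℂ) (ω d ^ m) * ω d ^ m = 1 := by
  rw [map_pow, ← mul_pow, conj_omega_mul_self, one_pow]

lemma conj_omega_pow (d m : ℕ) : (starRingEnd ℂ) (ω d ^ m) = (ω d ^ m)⁻¹ :=
  eq_inv_of_mul_eq_one_left (conj_omega_pow_mul_self d m)

lemma normSq_omega_pow (d m : ℕ) : Complex.normSq (ω d ^ m) = 1 := by
  have h := conj_omega_pow_mul_self d m
  rw [mul_comm, Complex.mul_conj] at h
  exact_mod_cast h

lemma omega_ne_zero (d : ℕ) : ω d ≠ 0 := Complex.exp_ne_zero _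

lemma omega_pow_d {d : ℕ} (hd : d ≠ 0) : ω d ^ d = 1 := (omega_prim hd).pow_eq_one

lemma omega_pow_mod {d : ℕ} (hd : d ≠ 0) (x : ℕ) : ω d ^ (x % d) = ω d ^ x := by
  conv_rhs => rw [← Nat.div_add_mod x d]
  rw [pow_add, pow_mul, omega_pow_d hd, one_pow, one_mul]

lemma omega_pow_congr {d : ℕ} (hd : d ≠ 0) {m n : ℕ} (h : m % d = n % d) :
    ω d ^ m = ω d ^ n := by
  rw [← omega_pow_mod hd m, h, omega_pow_mod hd]

lemma Ssum {d : ℕ} (hd : d ≠ 0) (m n : Fin d) :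
    ∑ b : Fin d, ω d ^ ((m : ℕ) * (b : ℕ)) * (starRingEnd ℂ) (ω d ^ ((n : ℕ) * (b : ℕ)))
      = if m = n then (d : ℂ) else 0 := by
  have hterm : ∀ b : Fin d,
      ω d ^ ((m : ℕ) * (b : ℕ)) * (starRingEnd ℂ) (ω d ^ ((n : ℕ) * (b : ℕ)))
        = (ω d ^ (m : ℕ) * (ω d ^ (n : ℕ))⁻¹) ^ (b : ℕ) := by
    intro b
    rw [conj_omega_pow, pow_mul, pow_mul, ← inv_pow, ← mul_pow]
  rw [Finset.sum_congr rfl (fun b _ => hterm b)]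
  rw [Fin.sum_univ_eq_sum_range (fun i => (ω d ^ (m : ℕ) * (ω d ^ (n : ℕ))⁻¹) ^ i) d]
  by_cases h : m = n
  · subst h
    rw [mul_inv_cancel₀ (pow_ne_zero _ (omega_ne_zero d))]
    simp
  · have hz : ω d ^ (m : ℕ) * (ω d ^ (n : ℕ))⁻¹ ≠ 1 := by
      intro hc
      apply h
      have : ω d ^ (m : ℕ) = ω d ^ (n : ℕ) :=
        (mul_inv_eq_one₀ (pow_ne_zero _ (omega_ne_zero d))).mp hc
      exact Fin.ext ((omega_prim hd).pow_inj m.isLt n.isLt this)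
    rw [geom_sum_eq hz]
    have hden : (ω d ^ (m : ℕ) * (ω d ^ (n : ℕ))⁻¹) ^ d = 1 := by
      have h1 : (ω d ^ (m : ℕ)) ^ d = 1 := by
        rw [← pow_mul, mul_comm, pow_mul, omega_pow_d hd, one_pow]
      have h2 : (ω d ^ (n : ℕ)) ^ d = 1 := by
        rw [← pow_mul, mul_comm, pow_mul, omega_pow_d hd, one_pow]
      rw [mul_pow, h1, inv_pow, h2, inv_one, one_mul]
    rw [hden, sub_self, zero_div, if_neg h]

end Aux17

namespace Aux17b
open Aux17

lemma Xp_pow_apply {d : ℕ} (hd : 0 < d) (a : ℕ) (j k : Fin d) :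
    (Xp d ^ a) j k = if (j : ℕ) = ((k : ℕ) + a) % d then 1 else 0 := by
  induction a generalizing j k with
  | zero =>
    rw [pow_zero, Matrix.one_apply]
    simp [Fin.ext_iff, Nat.mod_eq_of_lt k.isLt]
  | succ n ih =>
    rw [pow_succ, Matrix.mul_apply]
    set k1 : Fin d := ⟨((k : ℕ) + 1) % d, Nat.mod_lt _ hd⟩ with hk1
    have hXp : ∀ m : Fin d, Xp d m k = if m = k1 then 1 else 0 := by
      intro m
      simp [Xp, Fin.ext_iff, hk1]
    calc ∑ m : Fin d, (Xp d ^ n) j m * Xp d m k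
        = ∑ m : Fin d, if m = k1 then (Xp d ^ n) j m else 0 := by
          refine Finset.sum_congr rfl fun m _ => ?_
          rw [hXp m]
          by_cases h : m = k1 <;> simp [h]
      _ = (Xp d ^ n) j k1 := Finset.sum_ite_eq' _ _ _ |>.trans (by simp)
      _ = if (j : ℕ) = ((k : ℕ) + (n + 1)) % d then 1 else 0 := by
          rw [ih]
          congr 1
          simp only [hk1]
          rw [Nat.mod_add_mod, add_assoc, Nat.add_comm 1 n]

lemma Zp_pow_apply {d : ℕ} (b : ℕ) (m k : Fin d) :
    (Zp d ^ b) m k = if m = k then ω d ^ ((m : ℕ) * b) else 0 := by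
  rw [Zp, Matrix.diagonal_pow, Matrix.diagonal_apply]
  simp [pow_mul]

lemma enc_apply {d : ℕ} [NeZero d] (a b j : Fin d) :
    enc d a b j = ω d ^ (((j - a : Fin d) : ℕ) * (b : ℕ)) * Psi d (j - a) := by
  have hd : 0 < d := Nat.pos_of_ne_zero (NeZero.ne d)
  have hM : ∀ k : Fin d, ((Xp d ^ (a : ℕ)) * (Zp d ^ (b : ℕ))) j k
      = if k = j - a then ω d ^ ((k : ℕ) * (b : ℕ)) else 0 := by
    intro k
    rw [Matrix.mul_apply]
    have : ∀ m : Fin d, (Xp d ^ (a : ℕ)) j m * (Zp d ^ (b : ℕ)) m k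
        = if m = k then (Xp d ^ (a : ℕ)) j k * ω d ^ ((k : ℕ) * (b : ℕ)) else 0 := by
      intro m
      rw [Zp_pow_apply]
      by_cases h : m = k <;> simp [h]
    rw [Finset.sum_congr rfl fun m _ => this m]
    rw [Finset.sum_ite_eq' _ _ _]
    simp only [Finset.mem_univ, if_true]
    rw [Xp_pow_apply hd]
    have hcond : ((j : ℕ) = ((k : ℕ) + (a : ℕ)) % d) ↔ (k = j - a) := by
      rw [← Fin.val_add, Fin.val_eq_val, eq_comm, eq_sub_iff_add_eq]
    by_cases h : k = j - a
    · rw [if_pos (hcond.mpr h), one_mul, if_pos h]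
    · rw [if_neg (fun hc => h (hcond.mp hc)), zero_mul, if_neg h]
  rw [enc, Matrix.mulVec, dotProduct]
  calc ∑ k : Fin d, ((Xp d ^ (a : ℕ)) * (Zp d ^ (b : ℕ))) j k * Psi d k
      = ∑ k : Fin d, if k = j - a then ω d ^ ((k : ℕ) * (b : ℕ)) * Psi d k else 0 := by
        refine Finset.sum_congr rfl fun k _ => ?_
        rw [hM k]
        by_cases h : k = j - a <;> simp [h]
    _ = ω d ^ (((j - a : Fin d) : ℕ) * (b : ℕ)) * Psi d (j - a) := by
        rw [Finset.sum_ite_eq' _ _ _]; simp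

lemma Psi_apply {d : ℕ} [NeZero d] (j : Fin d) :
    Psi d j = (((Real.sqrt (2 * (1 + 1 / Real.sqrt d)))⁻¹ *
      ((if (j : ℕ) = 0 then 1 else 0) + (Real.sqrt d)⁻¹) : ℝ) : ℂ) := by
  have hF : (Fm d).mulVec (e0 d) j = (((Real.sqrt d)⁻¹ : ℝ) : ℂ) := by
    rw [Matrix.mulVec, dotProduct]
    have : ∀ k : Fin d, Fm d j k * e0 d k
        = if k = (0 : Fin d) then ((Real.sqrt d : ℝ) : ℂ)⁻¹ else 0 := by
      intro k
      by_cases h : k = 0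
      · subst h
        simp [Fm, e0, Fin.val_zero]
      · have : (k : ℕ) ≠ 0 := fun hc => h (Fin.ext (by simp [hc]))
        simp [Fm, e0, this, h]
    rw [Finset.sum_congr rfl fun k _ => this k, Finset.sum_ite_eq' _ _ _]
    simp
  simp only [Psi, Pi.smul_apply, Pi.add_apply, smul_eq_mul, hF, e0]
  push_cast
  congr 1
  split <;> simp

end Aux17b

namespace Aux17c
open Aux17 Aux17b

def fv {d : ℕ} (v : Fin d) : Fin d → ℂ :=
  fun j => ω d ^ ((j : ℕ) * (v : ℕ)) * (((Real.sqrt d : ℝ)) : ℂ)⁻¹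

lemma sqrtd_pos {d : ℕ} (hd : 0 < d) : 0 < Real.sqrt d :=
  Real.sqrt_pos.mpr (by exact_mod_cast hd)

lemma t_pos {d : ℕ} : 0 < Real.sqrt (2 * (1 + 1 / Real.sqrt d)) := by
  apply Real.sqrt_pos.mpr
  have : 0 ≤ 1 / Real.sqrt d := by positivity
  linarith

lemma t_sq {d : ℕ} :
    (Real.sqrt (2 * (1 + 1 / Real.sqrt d))) ^ 2 = 2 * (1 + 1 / Real.sqrt d) := by
  apply Real.sq_sqrt
  have : 0 ≤ 1 / Real.sqrt d := by positivity
  linarith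

lemma sq_sqrtd {d : ℕ} : (Real.sqrt d) ^ 2 = (d : ℝ) :=
  Real.sq_sqrt (by positivity)

lemma sum_delta_fin {d : ℕ} [NeZero d] (A B : ℝ) :
    ∑ j : Fin d, (if (j : ℕ) = 0 then A else B) = B * d + (A - B) := by
  have h : ∀ j : Fin d, (if (j : ℕ) = 0 then A else B)
      = B + (if j = (0 : Fin d) then A - B else 0) := by
    intro j
    by_cases hj : j = 0
    · subst hj; simp
    · have : (j : ℕ) ≠ 0 := fun hc => hj (Fin.ext (by simp [hc]))
      simp [this, hj]
  rw [Finset.sum_congr rfl fun j _ => h j, Finset.sum_add_distrib,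
    Finset.sum_const, Finset.sum_ite_eq' _ _ _]
  simp [mul_comm]

lemma dotc_self_real {d : ℕ} (v : Fin d → ℂ) :
    dotc v v = ((∑ j, Complex.normSq (v j) : ℝ) : ℂ) := by
  rw [dotc]
  push_cast
  refine Finset.sum_congr rfl fun j _ => ?_
  rw [mul_comm, Complex.mul_conj]

lemma dotc_conj {d : ℕ} (v w : Fin d → ℂ) :
    (starRingEnd ℂ) (dotc w v) = dotc v w := by
  rw [dotc, dotc, map_sum]
  refine Finset.sum_congr rfl fun j _ => ?_
  simp [mul_comm]

lemma dotc_Psi_Psi {d : ℕ} [NeZero d] (hd : 0 < d) :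
    dotc (Psi d) (Psi d) = 1 := by
  set t := Real.sqrt (2 * (1 + 1 / Real.sqrt d)) with ht
  set s := (Real.sqrt d)⁻¹ with hs
  rw [dotc_self_real]
  have h1 : ∀ j : Fin d, Complex.normSq (Psi d j)
      = if (j : ℕ) = 0 then (t⁻¹ * (1 + s)) ^ 2 else (t⁻¹ * s) ^ 2 := by
    intro j
    rw [Psi_apply, Complex.normSq_ofReal]
    by_cases hj : (j : ℕ) = 0
    · simp only [if_pos hj]; ring
    · simp only [if_neg hj]; ring
  rw [Finset.sum_congr rfl fun j _ => h1 j, sum_delta_fin]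
  have hsd : Real.sqrt d ≠ 0 := ne_of_gt (sqrtd_pos hd)
  have htne : t ≠ 0 := ne_of_gt t_pos
  have ht2 : t ^ 2 = 2 * (1 + s) := by rw [ht, t_sq, one_div]
  have hds : (d : ℝ) * s ^ 2 = 1 := by
    rw [hs, ← sq_sqrtd (d := d), Real.sqrt_sq (Real.sqrt_nonneg _), inv_pow,
      mul_inv_cancel₀ (pow_ne_zero 2 hsd)]
  have hfin : (t⁻¹ * s) ^ 2 * (d : ℝ) + ((t⁻¹ * (1 + s)) ^ 2 - (t⁻¹ * s) ^ 2) = 1 := by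
    have expand : (t⁻¹ * s) ^ 2 * (d : ℝ) + ((t⁻¹ * (1 + s)) ^ 2 - (t⁻¹ * s) ^ 2)
        = (t ^ 2)⁻¹ * ((d : ℝ) * s ^ 2 + 1 + 2 * s) := by
      field_simp
      ring
    rw [expand, hds, ht2, show (1 : ℝ) + 1 + 2 * s = 2 * (1 + s) by ring]
    have hpos : (0:ℝ) < 2 * (1 + s) := by
      have : 0 ≤ s := by positivity
      linarith
    exact inv_mul_cancel₀ (ne_of_gt hpos)
  exact_mod_cast hfin

lemma sum_Psi {d : ℕ} [NeZero d] (hd : 0 < d) :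
    ∑ j, Psi d j =
      (((Real.sqrt (2 * (1 + 1 / Real.sqrt d)))⁻¹ * (1 + Real.sqrt d) : ℝ) : ℂ) := by
  set t := Real.sqrt (2 * (1 + 1 / Real.sqrt d)) with ht
  set s := (Real.sqrt d)⁻¹ with hs
  have h1 : ∀ j : Fin d, Psi d j
      = ((if (j : ℕ) = 0 then t⁻¹ * (1 + s) else t⁻¹ * s : ℝ) : ℂ) := by
    intro j
    rw [Psi_apply]
    by_cases hj : (j : ℕ) = 0
    · rw [if_pos hj, if_pos hj]
    · rw [if_neg hj, if_neg hj, zero_add]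
  rw [Finset.sum_congr rfl fun j _ => h1 j]
  rw [← Complex.ofReal_sum, Complex.ofReal_inj]
  rw [sum_delta_fin]
  have hsd : Real.sqrt d ≠ 0 := ne_of_gt (sqrtd_pos hd)
  have hds : s * (d : ℝ) = Real.sqrt d := by
    rw [hs, ← sq_sqrtd (d := d), Real.sqrt_sq (Real.sqrt_nonneg _), pow_two,
      inv_mul_cancel_left₀ hsd]
  calc t⁻¹ * s * (d:ℝ) + (t⁻¹ * (1 + s) - t⁻¹ * s)
      = t⁻¹ * (s * d) + t⁻¹ := by ring
    _ = t⁻¹ * (1 + Real.sqrt d) := by rw [hds]; ring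

lemma dotc_enc_self {d : ℕ} [NeZero d] (a b : Fin d) :
    dotc (enc d a b) (enc d a b) = 1 := by
  have hd : 0 < d := Nat.pos_of_ne_zero (NeZero.ne d)
  rw [dotc]
  have h1 : ∀ j : Fin d,
      (starRingEnd ℂ) (enc d a b j) * enc d a b j
        = (starRingEnd ℂ) (Psi d (j - a)) * Psi d (j - a) := by
    intro j
    rw [enc_apply, _root_.map_mul]
    calc (starRingEnd ℂ) (ω d ^ (((j - a : Fin d) : ℕ) * (b : ℕ))) *
          (starRingEnd ℂ) (Psi d (j - a)) *
          (ω d ^ (((j - a : Fin d) : ℕ) * (b : ℕ)) * Psi d (j - a))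
        = ((starRingEnd ℂ) (ω d ^ (((j - a : Fin d) : ℕ) * (b : ℕ))) *
            ω d ^ (((j - a : Fin d) : ℕ) * (b : ℕ))) *
          ((starRingEnd ℂ) (Psi d (j - a)) * Psi d (j - a)) := by ring
      _ = (starRingEnd ℂ) (Psi d (j - a)) * Psi d (j - a) := by
          rw [conj_omega_pow_mul_self, one_mul]
  rw [Finset.sum_congr rfl fun j _ => h1 j]
  rw [Fintype.sum_equiv (Equiv.subRight a)
    (fun j => (starRingEnd ℂ) (Psi d (j - a)) * Psi d (j - a))
    (fun x => (starRingEnd ℂ) (Psi d x) * Psi d x) (fun j => rfl)]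
  exact dotc_Psi_Psi hd

lemma outer_mulVec {d : ℕ} (w x : Fin d → ℂ) :
    (outer w).mulVec x = fun i => w i * dotc w x := by
  funext i
  rw [Matrix.mulVec, dotProduct, dotc, Finset.mul_sum]
  refine Finset.sum_congr rfl fun j _ => ?_
  simp only [outer, Matrix.of_apply]
  ring

lemma outer_psd {d : ℕ} (v : Fin d → ℂ) : (outer v).PosSemidef := by
  refine Matrix.PosSemidef.of_dotProduct_mulVec_nonneg ?_ ?_
  · ext j k
    rw [Matrix.conjTranspose_apply]
    show (starRingEnd ℂ) (outer v k j) = outer v j k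
    simp only [outer, Matrix.of_apply, _root_.map_mul, Complex.conj_conj]
    ring
  · intro x
    have : star x ⬝ᵥ (outer v).mulVec x = ((Complex.normSq (dotc v x) : ℝ) : ℂ) := by
      rw [outer_mulVec, dotProduct]
      calc ∑ i, star x i * (v i * dotc v x)
          = (∑ i, (starRingEnd ℂ) (x i) * v i) * dotc v x := by
            rw [Finset.sum_mul]
            refine Finset.sum_congr rfl fun i _ => ?_
            simp only [Pi.star_apply, starRingEnd_apply]
            ring
        _ = dotc x v * dotc v x := rfl
        _ = dotc v x * (starRingEnd ℂ) (dotc v x) := by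
            rw [← dotc_conj x v]; ring
        _ = _ := Complex.mul_conj _
    rw [this]
    exact Complex.zero_le_real.mpr (Complex.normSq_nonneg _)

lemma smul_psd {d : ℕ} (c : ℝ) (hc : 0 ≤ c) {A : Matrix (Fin d) (Fin d) ℂ}
    (hA : A.PosSemidef) : (((c : ℝ) : ℂ) • A).PosSemidef := by
  refine Matrix.PosSemidef.of_dotProduct_mulVec_nonneg ?_ ?_
  · have h := hA.1
    rw [Matrix.IsHermitian, Matrix.conjTranspose_smul, h, Complex.star_def,
      Complex.conj_ofReal]
  · intro x
    rw [Matrix.smul_mulVec, dotProduct_smul, smul_eq_mul]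
    exact mul_nonneg (Complex.zero_le_real.mpr hc) (hA.dotProduct_mulVec_nonneg x)

lemma trace_mul_outer {d : ℕ} (A : Matrix (Fin d) (Fin d) ℂ) (v : Fin d → ℂ) :
    (A * outer v).trace = dotc v (A.mulVec v) := by
  rw [Matrix.trace, dotc]
  refine Finset.sum_congr rfl fun j _ => ?_
  rw [Matrix.diag_apply, Matrix.mul_apply, Matrix.mulVec, dotProduct, Finset.mul_sum]
  refine Finset.sum_congr rfl fun k _ => ?_
  simp only [outer, Matrix.of_apply]
  ring

lemma trace_outer_outer {d : ℕ} (w v : Fin d → ℂ) :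
    (outer w * outer v).trace = ((Complex.normSq (dotc w v) : ℝ) : ℂ) := by
  rw [trace_mul_outer, outer_mulVec, dotc]
  calc ∑ j, (starRingEnd ℂ) (v j) * (w j * dotc w v)
      = (∑ j, (starRingEnd ℂ) (v j) * w j) * dotc w v := by
        rw [Finset.sum_mul]
        refine Finset.sum_congr rfl fun j _ => ?_
        ring
    _ = dotc v w * dotc w v := rfl
    _ = dotc w v * (starRingEnd ℂ) (dotc w v) := by
        rw [← dotc_conj v w]; ring
    _ = _ := Complex.mul_conj _

lemma cs_normSq {d : ℕ} (v x : Fin d → ℂ) :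
    Complex.normSq (∑ j, v j * x j)
      ≤ (∑ j, Complex.normSq (v j)) * (∑ j, Complex.normSq (x j)) := by
  have habs : ‖∑ j, v j * x j‖
      ≤ ∑ j, ‖v j‖ * ‖x j‖ := by
    refine le_trans (norm_sum_le _ _) ?_
    refine le_of_eq (Finset.sum_congr rfl fun j _ => ?_)
    exact norm_mul _ _
  have h2 := Finset.sum_mul_sq_le_sq_mul_sq Finset.univ
    (fun j => ‖v j‖) (fun j => ‖x j‖)
  calc Complex.normSq (∑ j, v j * x j)
      = (‖∑ j, v j * x j‖) ^ 2 := (Complex.sq_norm _).symm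
    _ ≤ (∑ j, ‖v j‖ * ‖x j‖) ^ 2 := by
        apply pow_le_pow_left₀ (norm_nonneg _) habs
    _ ≤ (∑ j, (‖v j‖) ^ 2) * (∑ j, (‖x j‖) ^ 2) := h2
    _ = _ := by simp [Complex.sq_norm]

lemma quad_le_trace {d : ℕ} {M : Matrix (Fin d) (Fin d) ℂ} (hM : M.PosSemidef)
    {v : Fin d → ℂ} (hv : ∑ j, Complex.normSq (v j) = 1) :
    ((M * outer v).trace).re ≤ (M.trace).re := by
  obtain ⟨B, rfl⟩ := by
    open scoped MatrixOrder in exact CStarAlgebra.nonneg_iff_eq_star_mul_self.mp hM.nonneg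
  simp only [Matrix.star_eq_conjTranspose]
  have h1 : ((Bᴴ * B) * outer v).trace
      = ((∑ k, Complex.normSq (B.mulVec v k) : ℝ) : ℂ) := by
    rw [trace_mul_outer, ← Matrix.mulVec_mulVec, dotc]
    have hstep : ∀ j : Fin d, (starRingEnd ℂ) (v j) * Bᴴ.mulVec (B.mulVec v) j
        = ∑ k, B.mulVec v k * ((starRingEnd ℂ) (B k j) * (starRingEnd ℂ) (v j)) := by
      intro j
      rw [Matrix.mulVec, dotProduct, Finset.mul_sum]
      refine Finset.sum_congr rfl fun k _ => ?_
      simp [Matrix.conjTranspose_apply]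
      ring
    rw [Finset.sum_congr rfl fun j _ => hstep j, Finset.sum_comm]
    push_cast
    refine Finset.sum_congr rfl fun k _ => ?_
    rw [← Finset.mul_sum]
    have : ∑ j, (starRingEnd ℂ) (B k j) * (starRingEnd ℂ) (v j)
        = (starRingEnd ℂ) (B.mulVec v k) := by
      rw [Matrix.mulVec, dotProduct, map_sum]
      refine Finset.sum_congr rfl fun j _ => ?_
      rw [_root_.map_mul]
    rw [this, Complex.mul_conj]
  have h2 : (Bᴴ * B).trace = ((∑ k, ∑ j, Complex.normSq (B j k) : ℝ) : ℂ) := by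
    rw [Matrix.trace]
    push_cast
    refine Finset.sum_congr rfl fun k _ => ?_
    rw [Matrix.diag_apply, Matrix.mul_apply]
    refine Finset.sum_congr rfl fun j _ => ?_
    rw [Matrix.conjTranspose_apply, mul_comm, ← starRingEnd_apply, Complex.mul_conj]
  rw [h1, h2, Complex.ofReal_re, Complex.ofReal_re, Finset.sum_comm]
  refine Finset.sum_le_sum fun k _ => ?_
  have := cs_normSq (fun j => B k j) v
  rw [hv, mul_one] at this
  exact le_trans (le_of_eq (by rw [Matrix.mulVec, dotProduct])) this

lemma sum_outer_enc {d : ℕ} [NeZero d] :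
    ∑ a : Fin d, ∑ b : Fin d, outer (enc d a b) = (d : ℂ) • 1 := by
  have hd : 0 < d := Nat.pos_of_ne_zero (NeZero.ne d)
  ext j k
  simp only [Matrix.sum_apply, Matrix.smul_apply, Matrix.one_apply, smul_eq_mul]
  have hinner : ∀ a : Fin d, ∑ b : Fin d, outer (enc d a b) j k
      = (Psi d (j - a) * (starRingEnd ℂ) (Psi d (k - a))) *
        (if (j - a : Fin d) = (k - a : Fin d) then (d : ℂ) else 0) := by
    intro a
    rw [← Ssum (NeZero.ne d) (j - a) (k - a), Finset.mul_sum]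
    refine Finset.sum_congr rfl fun b _ => ?_
    simp only [outer, Matrix.of_apply, enc_apply, _root_.map_mul]
    ring
  rw [Finset.sum_congr rfl fun a _ => hinner a]
  by_cases hjk : j = k
  · subst hjk
    rw [if_pos rfl]
    have hsimp : ∀ a : Fin d,
        (Psi d (j - a) * (starRingEnd ℂ) (Psi d (j - a))) *
          (if (j - a : Fin d) = (j - a : Fin d) then (d : ℂ) else 0)
        = (d : ℂ) * ((starRingEnd ℂ) (Psi d (j - a)) * Psi d (j - a)) := by
      intro a; rw [if_pos rfl]; ring
    rw [Finset.sum_congr rfl fun a _ => hsimp a, ← Finset.mul_sum]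
    rw [Fintype.sum_equiv (Equiv.subLeft j)
      (fun a => (starRingEnd ℂ) (Psi d (j - a)) * Psi d (j - a))
      (fun x => (starRingEnd ℂ) (Psi d x) * Psi d x) (fun a => rfl)]
    rw [show ∑ x, (starRingEnd ℂ) (Psi d x) * Psi d x = dotc (Psi d) (Psi d) from rfl,
      dotc_Psi_Psi hd, mul_one]
  · rw [if_neg hjk]
    have hz : ∀ a : Fin d,
        (Psi d (j - a) * (starRingEnd ℂ) (Psi d (k - a))) *
          (if (j - a : Fin d) = (k - a : Fin d) then (d : ℂ) else 0) = 0 := by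
      intro a
      rw [if_neg (fun hc => hjk (sub_left_inj.mp hc)), mul_zero]
    rw [Finset.sum_congr rfl fun a _ => hz a, Finset.sum_const_zero, mul_zero]

end Aux17c

namespace Aux17d
open Aux17 Aux17b Aux17c

lemma sum_outer_ket {d : ℕ} : ∑ v : Fin d, outer (ket d v) = 1 := by
  ext j k
  simp only [Matrix.sum_apply, outer, Matrix.of_apply, Matrix.one_apply]
  have hterm : ∀ v : Fin d, ket d v j * (starRingEnd ℂ) (ket d v k)
      = if v = j then (if j = k then 1 else 0) else 0 := by
    intro v
    by_cases hv : v = j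
    · rw [if_pos hv]
      simp only [ket]
      rw [if_pos hv.symm, one_mul, ← hv]
      by_cases hk : k = v
      · rw [if_pos hk, if_pos hk.symm]; simp
      · rw [if_neg hk, if_neg (fun hc => hk hc.symm)]; simp
    · rw [if_neg hv]
      simp only [ket]
      rw [if_neg (fun hc : j = v => hv hc.symm), zero_mul]
  rw [Finset.sum_congr rfl fun v _ => hterm v, Finset.sum_ite_eq' _ _ _]
  simp

lemma sum_outer_fv {d : ℕ} [NeZero d] : ∑ v : Fin d, outer (fv v) = 1 := by
  have hd : 0 < d := Nat.pos_of_ne_zero (NeZero.ne d)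
  have hsd : (0 : ℝ) < Real.sqrt d := sqrtd_pos hd
  ext j k
  simp only [Matrix.sum_apply, outer, Matrix.of_apply, Matrix.one_apply]
  have hterm : ∀ v : Fin d, fv v j * (starRingEnd ℂ) (fv v k)
      = (((Real.sqrt d : ℝ) : ℂ)⁻¹ * ((Real.sqrt d : ℝ) : ℂ)⁻¹) *
        (ω d ^ ((j : ℕ) * (v : ℕ)) * (starRingEnd ℂ) (ω d ^ ((k : ℕ) * (v : ℕ)))) := by
    intro v
    simp only [fv, _root_.map_mul, map_inv₀, Complex.conj_ofReal]
    ring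
  rw [Finset.sum_congr rfl fun v _ => hterm v, ← Finset.mul_sum, Ssum (NeZero.ne d)]
  by_cases hjk : j = k
  · subst hjk
    rw [if_pos rfl, if_pos rfl]
    rw [← mul_inv, ← Complex.ofReal_mul, Real.mul_self_sqrt (by positivity)]
    exact inv_mul_cancel₀ (by exact_mod_cast hd.ne')
  · rw [if_neg hjk, if_neg hjk, mul_zero]

lemma dotc_ket_left {d : ℕ} (t : Fin d) (x : Fin d → ℂ) :
    dotc (ket d t) x = x t := by
  rw [dotc]
  have hterm : ∀ j : Fin d, (starRingEnd ℂ) (ket d t j) * x j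
      = if j = t then x j else 0 := by
    intro j
    by_cases h : j = t <;> simp [ket, h]
  rw [Finset.sum_congr rfl fun j _ => hterm j, Finset.sum_ite_eq' _ _ _]
  simp

lemma Psi_zero {d : ℕ} [NeZero d] :
    Psi d 0 = ((((Real.sqrt (2 * (1 + 1 / Real.sqrt d)))⁻¹ *
      (1 + (Real.sqrt d)⁻¹)) : ℝ) : ℂ) := by
  rw [Psi_apply]
  norm_num

lemma dotc_ket_enc {d : ℕ} [NeZero d] (a b : Fin d) :
    dotc (ket d a) (enc d a b) = Psi d 0 := by
  rw [dotc_ket_left, enc_apply, sub_self]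
  norm_num

lemma dotc_fv_enc {d : ℕ} [NeZero d] (a b : Fin d) :
    dotc (fv b) (enc d a b)
      = (starRingEnd ℂ) (ω d ^ ((a : ℕ) * (b : ℕ))) *
        (((Real.sqrt d : ℝ) : ℂ)⁻¹ * ∑ k, Psi d k) := by
  rw [dotc]
  rw [← Fintype.sum_equiv (Equiv.addRight a)
    (fun k => (starRingEnd ℂ) (fv b (k + a)) * enc d a b (k + a))
    (fun j => (starRingEnd ℂ) (fv b j) * enc d a b j) (fun k => rfl)]
  have hterm : ∀ k : Fin d, (starRingEnd ℂ) (fv b (k + a)) * enc d a b (k + a)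
      = (starRingEnd ℂ) (ω d ^ ((a : ℕ) * (b : ℕ))) *
        (((Real.sqrt d : ℝ) : ℂ)⁻¹ * Psi d k) := by
    intro k
    rw [enc_apply, add_sub_cancel_right]
    have hexp : ω d ^ (((k + a : Fin d) : ℕ) * (b : ℕ))
        = ω d ^ ((k : ℕ) * (b : ℕ)) * ω d ^ ((a : ℕ) * (b : ℕ)) := by
      rw [← pow_add, ← add_mul]
      apply omega_pow_congr (NeZero.ne d)
      rw [Fin.val_add]
      exact Nat.mod_mul_mod _ _ _
    rw [show fv b (k + a) = ω d ^ (((k + a : Fin d) : ℕ) * (b : ℕ)) *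
        ((Real.sqrt d : ℝ) : ℂ)⁻¹ from rfl, hexp]
    simp only [_root_.map_mul, map_inv₀, Complex.conj_ofReal]
    calc (starRingEnd ℂ) (ω d ^ ((k : ℕ) * (b : ℕ))) *
          (starRingEnd ℂ) (ω d ^ ((a : ℕ) * (b : ℕ))) *
          (((Real.sqrt d : ℝ) : ℂ))⁻¹ * (ω d ^ ((k : ℕ) * (b : ℕ)) * Psi d k)
        = ((starRingEnd ℂ) (ω d ^ ((k : ℕ) * (b : ℕ))) * ω d ^ ((k : ℕ) * (b : ℕ))) *
          ((starRingEnd ℂ) (ω d ^ ((a : ℕ) * (b : ℕ))) *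
            ((((Real.sqrt d : ℝ) : ℂ))⁻¹ * Psi d k)) := by ring
      _ = _ := by rw [conj_omega_pow_mul_self, one_mul]
  rw [Finset.sum_congr rfl fun k _ => hterm k, ← Finset.mul_sum, ← Finset.mul_sum]

lemma p_eq {d : ℕ} :
    ((Real.sqrt (2 * (1 + 1 / Real.sqrt d)))⁻¹ * (1 + (Real.sqrt d)⁻¹)) ^ 2
      = (1 + (Real.sqrt d)⁻¹) / 2 := by
  have htne : Real.sqrt (2 * (1 + 1 / Real.sqrt d)) ≠ 0 := ne_of_gt t_pos
  rw [mul_pow, inv_pow, t_sq, one_div]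
  have hpos : (0 : ℝ) < 1 + (Real.sqrt d)⁻¹ := by positivity
  field_simp

lemma p_eq2 {d : ℕ} (hd : 0 < d) :
    ((Real.sqrt d)⁻¹ * ((Real.sqrt (2 * (1 + 1 / Real.sqrt d)))⁻¹ * (1 + Real.sqrt d))) ^ 2
      = (1 + (Real.sqrt d)⁻¹) / 2 := by
  have hsd : Real.sqrt d ≠ 0 := ne_of_gt (sqrtd_pos hd)
  have hkey : (Real.sqrt d)⁻¹ * (1 + Real.sqrt d) = 1 + (Real.sqrt d)⁻¹ := by
    rw [mul_add, mul_one, inv_mul_cancel₀ hsd, add_comm]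
  rw [show (Real.sqrt d)⁻¹ * ((Real.sqrt (2 * (1 + 1 / Real.sqrt d)))⁻¹ * (1 + Real.sqrt d))
      = (Real.sqrt (2 * (1 + 1 / Real.sqrt d)))⁻¹ * ((Real.sqrt d)⁻¹ * (1 + Real.sqrt d)) by ring,
    hkey]
  exact p_eq

lemma tr_ket {d : ℕ} [NeZero d] (a b : Fin d) :
    ((outer (ket d a) * outer (enc d a b)).trace).re = (1 + (Real.sqrt d)⁻¹) / 2 := by
  rw [trace_outer_outer, Complex.ofReal_re, dotc_ket_enc, Psi_zero,
    Complex.normSq_ofReal, ← pow_two, p_eq]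

lemma tr_fv {d : ℕ} [NeZero d] (a b : Fin d) :
    ((outer (fv b) * outer (enc d a b)).trace).re = (1 + (Real.sqrt d)⁻¹) / 2 := by
  have hd : 0 < d := Nat.pos_of_ne_zero (NeZero.ne d)
  rw [trace_outer_outer, Complex.ofReal_re, dotc_fv_enc, sum_Psi hd]
  rw [show (((Real.sqrt d : ℝ) : ℂ)⁻¹ *
      (((Real.sqrt (2 * (1 + 1 / Real.sqrt d)))⁻¹ * (1 + Real.sqrt d) : ℝ) : ℂ))
      = ((((Real.sqrt d)⁻¹ * ((Real.sqrt (2 * (1 + 1 / Real.sqrt d)))⁻¹ *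
          (1 + Real.sqrt d)) : ℝ)) : ℂ) by push_cast; ring]
  rw [Complex.normSq_mul, Complex.normSq_conj, normSq_omega_pow, one_mul,
    Complex.normSq_ofReal, ← pow_two, p_eq2 hd]

end Aux17d

open Aux17 Aux17b Aux17c Aux17d

theorem stmt_17 (K : ℝ) (hK : 0 < K) :
    ∃ d : ℕ, Nat.Prime d ∧ Real.logb 2 d ≥ 2 * K + 2 ∧
      (1 : ℝ) < Real.logb 2 d / 2 - K ∧
      (∀ y₀ y₁ : Fin d, dotc (enc d y₀ y₁) (enc d y₀ y₁) = 1) ∧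
      IsGreatest {x : ℝ | ∃ M : Fin d × Fin d → Matrix (Fin d) (Fin d) ℂ,
          (∀ y, (M y).PosSemidef) ∧ (∑ y, M y = 1) ∧
          x = ((d : ℝ) ^ 2)⁻¹ * ∑ y₀ : Fin d, ∑ y₁ : Fin d,
            ((M (y₀, y₁) * outer (enc d y₀ y₁)).trace).re}
        ((d : ℝ)⁻¹) ∧
      -Real.logb 2 ((d : ℝ)⁻¹) = Real.logb 2 d ∧
      ∀ q : Fin d × Fin d → ℝ, (∀ y, 0 ≤ q y) → (∀ y, q y ≤ 1) →
        ∃ (M : Fin 2 → Fin d → Matrix (Fin d) (Fin d) ℂ) (g : ℝ),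
          (∀ c v, (M c v).PosSemidef) ∧ (∀ c, ∑ v, M c v = 1) ∧
          g = ∑ c : Fin 2, ∑ y₀ : Fin d, ∑ y₁ : Fin d,
              (((d : ℝ) ^ 2)⁻¹ * (if c = 0 then q (y₀, y₁) else 1 - q (y₀, y₁))) *
                ((M c (if c = 0 then y₀ else y₁) * outer (enc d y₀ y₁)).trace).re ∧
          (1 : ℝ) / 2 ≤ g ∧ -Real.logb 2 g ≤ 1 := by

  obtain ⟨d, hdle, hp⟩ := Nat.exists_infinite_primes (⌈(2:ℝ) ^ (2*K+2)⌉₊ + 1)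
  haveI : NeZero d := ⟨hp.pos.ne'⟩
  have hd : 0 < d := hp.pos
  have hdR : (0:ℝ) < d := by exact_mod_cast hd
  have hdne : (d:ℝ) ≠ 0 := ne_of_gt hdR
  have hlt : (2:ℝ) ^ (2*K+2) < (d:ℝ) := by
    calc (2:ℝ) ^ (2*K+2) ≤ (⌈(2:ℝ) ^ (2*K+2)⌉₊ : ℝ) := Nat.le_ceil _
      _ < (⌈(2:ℝ) ^ (2*K+2)⌉₊ : ℝ) + 1 := by linarith
      _ ≤ (d:ℝ) := by exact_mod_cast hdle
  have hlog : 2*K+2 < Real.logb 2 (d:ℝ) :=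
    (Real.lt_logb_iff_rpow_lt one_lt_two hdR).mpr hlt
  refine ⟨d, hp, le_of_lt hlog, by linarith, fun a b => dotc_enc_self a b, ?_, ?_, ?_⟩
  · constructor
    · -- membership: optimal POVM
      refine ⟨fun y => (((d:ℝ)⁻¹ : ℝ) : ℂ) • outer (enc d y.1 y.2),
        fun y => smul_psd _ (by positivity) (outer_psd _), ?_, ?_⟩
      · rw [← Finset.smul_sum]
        have hS : ∑ y : Fin d × Fin d, outer (enc d y.1 y.2) = (d:ℂ) • (1 : Matrix (Fin d) (Fin d) ℂ) := by
          rw [Fintype.sum_prod_type]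
          exact sum_outer_enc
        rw [hS, smul_smul, show ((((d:ℝ)⁻¹ : ℝ) : ℂ)) * (d:ℂ) = 1 by
          push_cast; exact inv_mul_cancel₀ (by exact_mod_cast hdne), one_smul]
      · have htr : ∀ a b : Fin d,
            ((((((d:ℝ)⁻¹ : ℝ) : ℂ) • outer (enc d a b)) * outer (enc d a b)).trace).re
              = (d:ℝ)⁻¹ := by
          intro a b
          rw [Matrix.smul_mul, Matrix.trace_smul, trace_outer_outer, dotc_enc_self]
          simp
        rw [Finset.sum_congr rfl fun a (_ : a ∈ Finset.univ) =>
          Finset.sum_congr rfl fun b (_ : b ∈ Finset.univ) => htr a b]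
        simp only [Finset.sum_const, Finset.card_univ, Fintype.card_fin, nsmul_eq_mul]
        field_simp
    · -- upper bound
      rintro x ⟨M, hpsd, hsum, rfl⟩
      have hnorm : ∀ a b : Fin d, ∑ j, Complex.normSq (enc d a b j) = 1 := by
        intro a b
        have h := dotc_enc_self (d := d) a b
        rw [dotc_self_real] at h
        exact_mod_cast h
      have hb : ∀ a b : Fin d,
          ((M (a,b) * outer (enc d a b)).trace).re ≤ ((M (a,b)).trace).re :=
        fun a b => quad_le_trace (hpsd (a,b)) (hnorm a b)
      have hs2 : ∑ a : Fin d, ∑ b : Fin d, ((M (a,b)).trace).re = (d:ℝ) := by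
        have h1 : ∑ a : Fin d, ∑ b : Fin d, ((M (a,b)).trace).re
            = ((∑ y : Fin d × Fin d, M y).trace).re := by
          rw [Matrix.trace_sum, Complex.re_sum, Fintype.sum_prod_type]
        rw [h1, hsum, Matrix.trace_one]
        simp
      calc ((d:ℝ)^2)⁻¹ * ∑ a : Fin d, ∑ b : Fin d, ((M (a,b) * outer (enc d a b)).trace).re
          ≤ ((d:ℝ)^2)⁻¹ * ∑ a : Fin d, ∑ b : Fin d, ((M (a,b)).trace).re := by
            refine mul_le_mul_of_nonneg_left ?_ (by positivity)
            exact Finset.sum_le_sum fun a _ => Finset.sum_le_sum fun b _ => hb a b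
        _ = (d:ℝ)⁻¹ := by rw [hs2]; field_simp
  · rw [Real.logb_inv, neg_neg]
  · intro q hq0 hq1
    set p : ℝ := (1 + (Real.sqrt d)⁻¹)/2 with hpdef
    have hsnn : (0:ℝ) ≤ (Real.sqrt d)⁻¹ := by positivity
    have hphalf : (1:ℝ)/2 ≤ p := by rw [hpdef]; linarith
    refine ⟨![fun v => outer (ket d v), fun v => outer (fv v)], p, ?_, ?_, ?_, hphalf, ?_⟩
    · intro c v
      fin_cases c
      · simpa using outer_psd (ket d v)
      · simpa using outer_psd (fv v)
    · intro c
      fin_cases c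
      · simpa using sum_outer_ket
      · simpa using sum_outer_fv
    · rw [Fin.sum_univ_two]
      simp only [Matrix.cons_val_zero, Matrix.cons_val_one, Matrix.head_cons,
        if_pos rfl, if_neg (by decide : ¬(1 : Fin 2) = 0), if_true]
      simp only [tr_ket, tr_fv]
      simp only [← Finset.sum_add_distrib]
      have hcomb : ∀ a b : Fin d,
          (((d:ℝ)^2)⁻¹ * q (a,b)) * ((1 + (Real.sqrt d)⁻¹)/2)
            + (((d:ℝ)^2)⁻¹ * (1 - q (a,b))) * ((1 + (Real.sqrt d)⁻¹)/2)
          = ((d:ℝ)^2)⁻¹ * ((1 + (Real.sqrt d)⁻¹)/2) := by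
        intro a b
        ring
      simp only [hcomb]
      simp only [Finset.sum_const, Finset.card_univ, Fintype.card_fin, nsmul_eq_mul]
      rw [hpdef]
      field_simp
    · have hppos : (0:ℝ) < 1/2 := by norm_num
      have hlb : Real.logb 2 (1/2 : ℝ) ≤ Real.logb 2 p :=
        Real.logb_le_logb_of_le one_lt_two hppos hphalf
      have hhalf : Real.logb 2 (1/2 : ℝ) = -1 := by
        rw [one_div, Real.logb_inv, Real.logb_self_eq_one one_lt_two]
      linarith
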